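/- (Theorem 5.1, case (1).) Suppose the vector of all p-values is PRDS on the subset of true-null p-values, the selection rule is concordant, each null p-value is stochastically larger than or equal to Uniform(0,1), and each selected family i (with m_i hypotheses, m_{0i} true nulls) is tested by Bonferroni at level R_min(P^{(i)})q/m, i.e., H_{0ij} is rejected iff P_{ij} ≤ R_min(P^{(i)})q/(m·m_i). Then E( Σ_{i∈S(P)} V_i / max(|S(P)|, 1) ) ≤ q, where V_i is the number of true null hypotheses rejected in family i. -/

import Mathlib

open MeasureTheory ProbabilityTheory
open scoped Classical

lemma cond_le_one' {Ω : Type*} [MeasurableSpace Ω] (μ : Measure Ω) [IsProbabilityMeasure μ]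
    {s : Set Ω} (hs : MeasurableSet s) (t : Set Ω) : μ[|s] t ≤ 1 := by
  rw [cond_apply hs]
  rcases eq_or_ne (μ s) 0 with h | h
  · have h0 : μ (s ∩ t) = 0 := measure_mono_null Set.inter_subset_left h
    simp [h0]
  · calc (μ s)⁻¹ * μ (s ∩ t) ≤ (μ s)⁻¹ * μ s :=
        mul_le_mul_right (measure_mono Set.inter_subset_left) _
    _ = 1 := ENNReal.inv_mul_cancel h (measure_ne_top μ s)

lemma aux_sum_le {Ω : Type*} [MeasurableSpace Ω] (μ : Measure Ω) [IsProbabilityMeasure μ]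
    (p : Ω → ℝ) (hp : Measurable p) (R : Ω → ℕ) (hR : Measurable R)
    (c : ℝ) (hc : 0 < c)
    (hprds : ∀ n : ℕ, 1 ≤ n →
      μ[|{x | p x ≤ (n : ℝ) * c}] {x | R x ≤ n} ≤ μ[|{x | p x ≤ ((n+1 : ℕ) : ℝ) * c}] {x | R x ≤ n})
    (hn : ∀ k : ℕ, μ {x | p x ≤ (k : ℝ) * c} ≤ ENNReal.ofReal ((k : ℝ) * c))
    (M : ℕ) (hM : 1 ≤ M) :
    ∑ k ∈ Finset.Icc 1 M, (μ {x | R x = k ∧ p x ≤ (k : ℝ) * c}).toReal / k ≤ c := by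
  classical
  have hBmeas : ∀ k : ℕ, MeasurableSet {x | p x ≤ (k : ℝ) * c} := fun k => hp measurableSet_Iic
  have hDmeas : ∀ k : ℕ, MeasurableSet {x | R x ≤ k} := fun k => hR (MeasurableSet.of_discrete : MeasurableSet (Set.Iic k))
  set a : ℕ → ℝ := fun k => (μ[|{x | p x ≤ (k : ℝ) * c}] {x | R x ≤ k}).toReal with ha
  set b : ℕ → ℝ := fun k => (μ[|{x | p x ≤ (k : ℝ) * c}] {x | R x ≤ k - 1}).toReal with hb
  have hcondle : ∀ (k : ℕ) (t : Set Ω), μ[|{x | p x ≤ (k : ℝ) * c}] t ≤ 1 :=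
    fun k t => cond_le_one' μ (hBmeas k) t
  have hcondne : ∀ (k : ℕ) (t : Set Ω), μ[|{x | p x ≤ (k : ℝ) * c}] t ≠ ⊤ :=
    fun k t => ne_top_of_le_ne_top ENNReal.one_ne_top (hcondle k t)
  have ha1 : ∀ k, a k ≤ 1 := fun k => by
    have h := ENNReal.toReal_mono ENNReal.one_ne_top (hcondle k {x | R x ≤ k})
    simpa [ha] using h
  have ha0 : ∀ k, 0 ≤ a k := fun k => ENNReal.toReal_nonneg
  have hb0 : ∀ k, 0 ≤ b k := fun k => ENNReal.toReal_nonneg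
  have key1 : ∀ k : ℕ, 1 ≤ k →
      (μ {x | R x = k ∧ p x ≤ (k : ℝ) * c}).toReal / k ≤ c * (a k - b k) := by
    intro k hk
    have hkR : (0:ℝ) < k := by exact_mod_cast hk
    have hsplit : μ ({x | p x ≤ (k : ℝ) * c} ∩ {x | R x ≤ k - 1})
        + μ {x | R x = k ∧ p x ≤ (k : ℝ) * c}
        = μ ({x | p x ≤ (k : ℝ) * c} ∩ {x | R x ≤ k}) := by
      rw [← measure_union ?hdisj ?hmeas]
      · congr 1
        ext x
        simp only [Set.mem_union, Set.mem_inter_iff, Set.mem_setOf_eq]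
        constructor
        · rintro (⟨h1, h2⟩ | ⟨h1, h2⟩)
          · exact ⟨h1, by omega⟩
          · exact ⟨h2, by omega⟩
        · rintro ⟨h1, h2⟩
          by_cases hRk : R x = k
          · exact Or.inr ⟨hRk, h1⟩
          · exact Or.inl ⟨h1, by omega⟩
      case hdisj =>
        rw [Set.disjoint_left]
        rintro x ⟨h1, h2⟩ ⟨h3, h4⟩
        simp only [Set.mem_setOf_eq] at h2
        omega
      case hmeas =>
        exact ((hR (MeasurableSet.of_discrete : MeasurableSet ({k} : Set ℕ))).inter (hBmeas k))
    rcases eq_or_ne (μ {x | p x ≤ (k : ℝ) * c}) 0 with h0 | h0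
    · have hA0 : μ {x | R x = k ∧ p x ≤ (k : ℝ) * c} = 0 :=
        measure_mono_null (fun x hx => hx.2) h0
      have haz : a k = 0 := by
        have : μ ({x | p x ≤ (k : ℝ) * c} ∩ {x | R x ≤ k}) = 0 :=
          measure_mono_null Set.inter_subset_left h0
        simp [ha, cond_apply (hBmeas k), this]
      have hbz : b k = 0 := by
        have : μ ({x | p x ≤ (k : ℝ) * c} ∩ {x | R x ≤ k - 1}) = 0 :=
          measure_mono_null Set.inter_subset_left h0
        simp [hb, cond_apply (hBmeas k), this]
      simp [hA0, haz, hbz]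
    · have hut : μ {x | p x ≤ (k : ℝ) * c} ≠ ⊤ := measure_ne_top μ _
      have hu0 : 0 < (μ {x | p x ≤ (k : ℝ) * c}).toReal := ENNReal.toReal_pos h0 hut
      have haval : a k = (μ ({x | p x ≤ (k : ℝ) * c} ∩ {x | R x ≤ k})).toReal
          / (μ {x | p x ≤ (k : ℝ) * c}).toReal := by
        simp [ha, cond_apply (hBmeas k), ENNReal.toReal_mul, ENNReal.toReal_inv,
          inv_mul_eq_div]
      have hbval : b k = (μ ({x | p x ≤ (k : ℝ) * c} ∩ {x | R x ≤ k - 1})).toReal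
          / (μ {x | p x ≤ (k : ℝ) * c}).toReal := by
        simp [hb, cond_apply (hBmeas k), ENNReal.toReal_mul, ENNReal.toReal_inv,
          inv_mul_eq_div]
      have hsplitR : (μ ({x | p x ≤ (k : ℝ) * c} ∩ {x | R x ≤ k - 1})).toReal
          + (μ {x | R x = k ∧ p x ≤ (k : ℝ) * c}).toReal
          = (μ ({x | p x ≤ (k : ℝ) * c} ∩ {x | R x ≤ k})).toReal := by
        rw [← ENNReal.toReal_add (measure_ne_top μ _) (measure_ne_top μ _), hsplit]
      have hukc : (μ {x | p x ≤ (k : ℝ) * c}).toReal ≤ (k : ℝ) * c := by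
        calc (μ {x | p x ≤ (k : ℝ) * c}).toReal
            ≤ (ENNReal.ofReal ((k : ℝ) * c)).toReal :=
              ENNReal.toReal_mono ENNReal.ofReal_ne_top (hn k)
          _ = (k : ℝ) * c := ENNReal.toReal_ofReal (by positivity)
      have hab : a k - b k = (μ {x | R x = k ∧ p x ≤ (k : ℝ) * c}).toReal
          / (μ {x | p x ≤ (k : ℝ) * c}).toReal := by
        rw [haval, hbval, div_sub_div_same]
        rw [← hsplitR]
        ring_nf
      rw [hab, mul_div_assoc']
      rw [div_le_div_iff₀ hkR hu0]
      have hX : 0 ≤ (μ {x | R x = k ∧ p x ≤ (k : ℝ) * c}).toReal := ENNReal.toReal_nonneg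
      nlinarith [mul_le_mul_of_nonneg_left hukc hX]
  have key2 : ∀ n : ℕ, 1 ≤ n → a n ≤ b (n + 1) := by
    intro n hn1
    have h := hprds n hn1
    have hD : {x | R x ≤ n + 1 - 1} = {x | R x ≤ n} := by
      ext x; simp
    have : b (n + 1) = (μ[|{x | p x ≤ ((n+1 : ℕ) : ℝ) * c}] {x | R x ≤ n}).toReal := by
      simp only [hb, hD]
    rw [this]
    exact ENNReal.toReal_mono (hcondne (n+1) _) h
  have key3 : ∀ n : ℕ, 1 ≤ n →
      ∑ k ∈ Finset.Icc 1 n, (μ {x | R x = k ∧ p x ≤ (k : ℝ) * c}).toReal / k ≤ c * a n := by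
    intro n hn1
    induction n, hn1 using Nat.le_induction with
    | base =>
      rw [show Finset.Icc 1 1 = {1} from rfl, Finset.sum_singleton]
      have := key1 1 le_rfl
      have := hb0 1
      nlinarith
    | succ n hn1 ih =>
      rw [Finset.sum_Icc_succ_top (by omega)]
      have h1 := key1 (n+1) (by omega)
      have h2 := key2 n hn1
      nlinarith
  calc ∑ k ∈ Finset.Icc 1 M, (μ {x | R x = k ∧ p x ≤ (k : ℝ) * c}).toReal / k
      ≤ c * a M := key3 M hM
    _ ≤ c * 1 := by nlinarith [ha1 M]
    _ = c := mul_one c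

/-- Theorem 5.1, case (1).  The joint p-value vector `x : ∀ i, Fin (mᵢ i) → ℝ`
(family `i` has `mᵢ i` hypotheses, with true nulls `nulls i`) has distribution `μ` that
is PRDS on the null coordinates (in the conditional form used in the proof: for every
increasing set `D` and null coordinate `(i,j)`, `Pr(D | P_{ij} ≤ α)` is nondecreasing
in `α`), and each null p-value is stochastically larger than or equal to Uniform(0,1).
The selection rule `S` is concordant: each `{x : k ≤ R_min(P^{(i)})}` is a decreasing
set, where `R_min(P^{(i)})` is the minimal number of selected families over family-`i`
p-value configurations keeping `i` selected.  Each selected family `i` is tested by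
Bonferroni at level `R_min(P^{(i)}) q / m`, rejecting `H_{0ij}` iff
`P_{ij} ≤ R_min(P^{(i)}) q / (m mᵢ)`; `V i` counts the rejected true nulls of family
`i`.  Then `E( Σ_{i ∈ S} V_i / max(|S|,1) ) ≤ q`. -/
theorem stmt15 {m : ℕ} (hm : 1 ≤ m) {mi : Fin m → ℕ} (hmi : ∀ i, 1 ≤ mi i)
    (nulls : ∀ i, Finset (Fin (mi i)))
    (μ : Measure (∀ i, Fin (mi i) → ℝ)) [IsProbabilityMeasure μ]
    (q : ℝ) (hq0 : 0 < q) (hq1 : q < 1)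
    (S : (∀ i, Fin (mi i) → ℝ) → Finset (Fin m))
    (hSmeas : ∀ i, MeasurableSet {x | i ∈ S x})
    (hScard : Measurable fun x => (S x).card)
    (Rmin : (∀ i, Fin (mi i) → ℝ) → Fin m → ℕ)
    (hRmin : ∀ x i, Rmin x i =
      sInf {r : ℕ | ∃ p : Fin (mi i) → ℝ, i ∈ S (Function.update x i p) ∧
        (S (Function.update x i p)).card = r})
    (hRminMeas : ∀ i, Measurable fun x => Rmin x i)
    (hconcordant : ∀ (i : Fin m) (k : ℕ), IsLowerSet {x | k ≤ Rmin x i})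
    (hPRDS : ∀ D : Set (∀ i, Fin (mi i) → ℝ), IsUpperSet D → MeasurableSet D →
      ∀ (i : Fin m), ∀ j ∈ nulls i, ∀ α α' : ℝ, 0 < α → α ≤ α' →
        μ[|{x | x i j ≤ α}] D ≤ μ[|{x | x i j ≤ α'}] D)
    (hnull : ∀ (i : Fin m), ∀ j ∈ nulls i, ∀ α : ℝ, 0 ≤ α →
      μ {x | x i j ≤ α} ≤ ENNReal.ofReal α) :
    (∫ x, (∑ i ∈ S x,
        (((nulls i).filter fun j => x i j ≤ Rmin x i * q / (m * mi i)).card : ℝ)) /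
      ((max (S x).card 1 : ℕ) : ℝ) ∂ μ) ≤ q := by
  classical
  have hmR : (0:ℝ) < m := Nat.cast_pos.mpr hm
  have hmiR : ∀ i, (0:ℝ) < mi i := fun i => Nat.cast_pos.mpr (hmi i)
  have hEval : ∀ (i : Fin m) (j : Fin (mi i)),
      Measurable fun x : ∀ i, Fin (mi i) → ℝ => x i j :=
    fun i j => (measurable_pi_apply j).comp (measurable_pi_apply i)
  have hAmeas : ∀ (i : Fin m) (j : Fin (mi i)) (k : ℕ),
      MeasurableSet {x : ∀ i, Fin (mi i) → ℝ |
        Rmin x i = k ∧ x i j ≤ (k : ℝ) * (q / (m * mi i))} := by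
    intro i j k
    exact ((hRminMeas i) (MeasurableSet.of_discrete : MeasurableSet ({k} : Set ℕ))).inter
      ((hEval i j) measurableSet_Iic)
  -- the dominating function G
  set G : (∀ i, Fin (mi i) → ℝ) → ℝ := fun x =>
    ∑ i : Fin m, ∑ j ∈ nulls i, ∑ k ∈ Finset.Icc 1 m,
      Set.indicator {x' : ∀ i, Fin (mi i) → ℝ |
        Rmin x' i = k ∧ x' i j ≤ (k : ℝ) * (q / (m * mi i))} (fun _ => (1:ℝ)/k) x with hG
  have hGint : Integrable G μ := by
    refine integrable_finset_sum _ fun i _ => integrable_finset_sum _ fun j _ =>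
      integrable_finset_sum _ fun k _ => (integrable_const _).indicator (hAmeas i j k)
  have hGnn : ∀ x, 0 ≤ G x := by
    intro x
    refine Finset.sum_nonneg fun i _ => Finset.sum_nonneg fun j _ =>
      Finset.sum_nonneg fun k _ => Set.indicator_nonneg (fun _ _ => by positivity) x
  -- pointwise bound of the integrand by G
  have hFG : ∀ x, (∑ i ∈ S x,
        (((nulls i).filter fun j => x i j ≤ Rmin x i * q / (m * mi i)).card : ℝ)) /
      ((max (S x).card 1 : ℕ) : ℝ) ≤ G x := by
    intro x
    rw [Finset.sum_div]
    refine le_trans (Finset.sum_le_sum fun i hi => ?_)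
      (Finset.sum_le_sum_of_subset_of_nonneg (Finset.subset_univ (S x))
        fun i _ _ => Finset.sum_nonneg fun j _ => Finset.sum_nonneg fun k _ =>
          Set.indicator_nonneg (fun _ _ => by positivity) x)
    -- i ∈ S x
    have hmemT : (S x).card ∈ {r : ℕ | ∃ p : Fin (mi i) → ℝ,
        i ∈ S (Function.update x i p) ∧ (S (Function.update x i p)).card = r} := by
      refine ⟨x i, ?_, ?_⟩ <;> rw [Function.update_eq_self]
      · exact hi
    have hrle : Rmin x i ≤ (S x).card := by
      rw [hRmin]; exact Nat.sInf_le hmemT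
    have hrmem : Rmin x i ∈ {r : ℕ | ∃ p : Fin (mi i) → ℝ,
        i ∈ S (Function.update x i p) ∧ (S (Function.update x i p)).card = r} := by
      rw [hRmin]; exact Nat.sInf_mem ⟨_, hmemT⟩
    obtain ⟨p, hp1, hp2⟩ := hrmem
    have hr1 : 1 ≤ Rmin x i := by
      rw [← hp2]; exact Finset.card_pos.mpr ⟨i, hp1⟩
    have hrm : Rmin x i ≤ m := by
      rw [← hp2]; simpa using Finset.card_le_univ (S (Function.update x i p))
    have hcard1 : 1 ≤ (S x).card := Finset.card_pos.mpr ⟨i, hi⟩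
    have hdmax : max (S x).card 1 = (S x).card := max_eq_left hcard1
    rw [hdmax]
    have hr0R : (0:ℝ) < (Rmin x i : ℝ) := by exact_mod_cast hr1
    have hstep1 : (((nulls i).filter fun j => x i j ≤ Rmin x i * q / (m * mi i)).card : ℝ) /
        ((S x).card : ℝ) ≤
        (((nulls i).filter fun j => x i j ≤ Rmin x i * q / (m * mi i)).card : ℝ) /
        (Rmin x i : ℝ) := by
      gcongr
    refine hstep1.trans (le_of_eq ?_)
    -- equality with the indicator sum
    rw [Finset.card_filter]
    push_cast
    rw [Finset.sum_div]
    refine Finset.sum_congr rfl fun j hj => ?_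
    rw [Finset.sum_eq_single_of_mem (Rmin x i) (Finset.mem_Icc.mpr ⟨hr1, hrm⟩)]
    · have hthr : (Rmin x i : ℝ) * q / ((m : ℝ) * (mi i : ℝ)) =
          (Rmin x i : ℝ) * (q / ((m : ℝ) * (mi i : ℝ))) := by
        rw [mul_div_assoc]
      by_cases h : x i j ≤ (Rmin x i : ℝ) * q / ((m : ℝ) * (mi i : ℝ))
      · have hmem : x ∈ {x' : ∀ i, Fin (mi i) → ℝ |
            Rmin x' i = Rmin x i ∧ x' i j ≤ (Rmin x i : ℝ) * (q / ((m : ℝ) * (mi i : ℝ)))} :=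
          ⟨rfl, by rw [← hthr]; exact h⟩
        rw [if_pos h, Set.indicator_of_mem hmem]
      · have hmem : x ∉ {x' : ∀ i, Fin (mi i) → ℝ |
            Rmin x' i = Rmin x i ∧ x' i j ≤ (Rmin x i : ℝ) * (q / ((m : ℝ) * (mi i : ℝ)))} := by
          rintro ⟨-, h2⟩
          exact h (by rw [hthr]; exact h2)
        rw [if_neg h, Set.indicator_of_notMem hmem, zero_div]
    · intro k hk hne
      rw [Set.indicator_apply, if_neg]
      rintro ⟨h1, -⟩
      exact hne h1.symm
  -- integral of G
  have hGeq : (∫ x, G x ∂μ) = ∑ i : Fin m, ∑ j ∈ nulls i, ∑ k ∈ Finset.Icc 1 m,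
      (μ {x : ∀ i, Fin (mi i) → ℝ |
        Rmin x i = k ∧ x i j ≤ (k : ℝ) * (q / (m * mi i))}).toReal / k := by
    rw [hG, integral_finset_sum _ fun i _ => integrable_finset_sum _ fun j _ =>
      integrable_finset_sum _ fun k _ => (integrable_const _).indicator (hAmeas i j k)]
    refine Finset.sum_congr rfl fun i _ => ?_
    rw [integral_finset_sum _ fun j _ =>
      integrable_finset_sum _ fun k _ => (integrable_const _).indicator (hAmeas i j k)]
    refine Finset.sum_congr rfl fun j _ => ?_
    rw [integral_finset_sum _ fun k _ => (integrable_const _).indicator (hAmeas i j k)]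
    refine Finset.sum_congr rfl fun k _ => ?_
    rw [integral_indicator_const _ (hAmeas i j k)]
    rw [smul_eq_mul, mul_one_div]
    rfl
  -- per (i,j) bound via the auxiliary lemma
  have key : ∀ (i : Fin m), ∀ j ∈ nulls i,
      ∑ k ∈ Finset.Icc 1 m, (μ {x : ∀ i, Fin (mi i) → ℝ |
        Rmin x i = k ∧ x i j ≤ (k : ℝ) * (q / (m * mi i))}).toReal / k ≤
      q / (m * mi i) := by
    intro i j hj
    have hc : (0:ℝ) < q / (m * mi i) := div_pos hq0 (mul_pos hmR (hmiR i))
    refine aux_sum_le μ (fun x => x i j) (hEval i j) (fun x => Rmin x i) (hRminMeas i)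
      (q / (m * mi i)) hc ?_ ?_ m hm
    · intro n hn1
      have hDup : IsUpperSet {x : ∀ i, Fin (mi i) → ℝ | Rmin x i ≤ n} := by
        have hcompl : {x : ∀ i, Fin (mi i) → ℝ | Rmin x i ≤ n} =
            {x : ∀ i, Fin (mi i) → ℝ | n + 1 ≤ Rmin x i}ᶜ := by
          ext x; simp only [Set.mem_setOf_eq, Set.mem_compl_iff]; omega
        rw [hcompl]
        exact (hconcordant i (n+1)).compl
      have hDmeas : MeasurableSet {x : ∀ i, Fin (mi i) → ℝ | Rmin x i ≤ n} :=
        (hRminMeas i) (MeasurableSet.of_discrete : MeasurableSet (Set.Iic n))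
      refine hPRDS _ hDup hDmeas i j hj _ _ ?_ ?_
      · have hnR : (0:ℝ) < (n:ℝ) := by exact_mod_cast hn1
        exact mul_pos hnR hc
      · have : (n:ℝ) ≤ ((n+1 : ℕ) : ℝ) := by push_cast; linarith
        exact mul_le_mul_of_nonneg_right this hc.le
    · intro k
      exact hnull i j hj _ (mul_nonneg (Nat.cast_nonneg k) hc.le)
  -- put everything together
  calc (∫ x, (∑ i ∈ S x,
        (((nulls i).filter fun j => x i j ≤ Rmin x i * q / (m * mi i)).card : ℝ)) /
      ((max (S x).card 1 : ℕ) : ℝ) ∂ μ) ≤ ∫ x, G x ∂μ := by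
        refine integral_mono_of_nonneg (Filter.Eventually.of_forall fun x => ?_) hGint
          (Filter.Eventually.of_forall hFG)
        exact div_nonneg (Finset.sum_nonneg fun i _ => Nat.cast_nonneg _) (Nat.cast_nonneg _)
    _ = ∑ i : Fin m, ∑ j ∈ nulls i, ∑ k ∈ Finset.Icc 1 m,
        (μ {x : ∀ i, Fin (mi i) → ℝ |
          Rmin x i = k ∧ x i j ≤ (k : ℝ) * (q / (m * mi i))}).toReal / k := hGeq
    _ ≤ ∑ i : Fin m, ∑ j ∈ nulls i, q / (m * mi i) :=
        Finset.sum_le_sum fun i _ => Finset.sum_le_sum fun j hj => key i j hj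
    _ = ∑ i : Fin m, ((nulls i).card : ℝ) * (q / (m * mi i)) := by
        simp [Finset.sum_const, nsmul_eq_mul]
    _ ≤ ∑ i : Fin m, (mi i : ℝ) * (q / (m * mi i)) := by
        refine Finset.sum_le_sum fun i _ => ?_
        have hcard : ((nulls i).card : ℝ) ≤ (mi i : ℝ) := by
          exact_mod_cast (Finset.card_le_univ (nulls i)).trans_eq (by simp)
        exact mul_le_mul_of_nonneg_right hcard (by positivity)
    _ = ∑ i : Fin m, q / m := by
        refine Finset.sum_congr rfl fun i _ => ?_
        have h1 : (m:ℝ) ≠ 0 := hmR.ne'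
        have h2 : (mi i : ℝ) ≠ 0 := (hmiR i).ne'
        field_simp
    _ = q := by
        rw [Finset.sum_const, Finset.card_univ, Fintype.card_fin, nsmul_eq_mul]
        have h1 : (m:ℝ) ≠ 0 := hmR.ne'
        field_simp
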